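/- Let P ⊆ ℝ^k be a nonempty polytope and let E be its set of extreme points (E is finite). Then a point γ ∈ ℝ^k belongs to the relative interior of P if and only if there exists a map λ : E → [0,1] such that Σ_{e∈E} λ(e) = 1, λ(e) > 0 for every e ∈ E, and γ = Σ_{e∈E} λ(e)·e. -/

import Mathlib

set_option maxHeartbeats 1000000

open Set MeasureTheory

private lemma combo_mem {k : ℕ} (F : Finset (Fin k → ℝ)) (w : (Fin k → ℝ) → ℝ)
    (h0 : ∀ e ∈ F, 0 ≤ w e) (h1 : ∑ e ∈ F, w e = 1) :
    (∑ e ∈ F, w e • e) ∈ convexHull ℝ (↑F : Set (Fin k → ℝ)) := by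
  have h := F.centerMass_mem_convexHull (w := w) (z := id) h0 (h1 ▸ one_pos)
    (fun i hi => Finset.mem_coe.2 hi)
  rwa [F.centerMass_eq_of_sum_1 _ h1] at h

private lemma mem_combo {k : ℕ} (F : Finset (Fin k → ℝ)) {z : Fin k → ℝ}
    (hz : z ∈ convexHull ℝ (↑F : Set (Fin k → ℝ))) :
    ∃ w : (Fin k → ℝ) → ℝ, (∀ e ∈ F, 0 ≤ w e) ∧ ∑ e ∈ F, w e = 1 ∧
      z = ∑ e ∈ F, w e • e := by
  rw [Finset.convexHull_eq] at hz
  obtain ⟨w, h0, h1, hc⟩ := hz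
  refine ⟨w, h0, h1, ?_⟩
  rw [← hc, F.centerMass_eq_of_sum_1 _ h1]; rfl

private lemma relint_backward {k : ℕ} (F : Finset (Fin k → ℝ)) (hF : F.Nonempty)
    (lam : (Fin k → ℝ) → ℝ) (hpos : ∀ e ∈ F, 0 < lam e) (hsum : ∑ e ∈ F, lam e = 1) :
    (∑ e ∈ F, lam e • e) ∈ intrinsicInterior ℝ (convexHull ℝ (↑F : Set (Fin k → ℝ))) := by
  classical
  set γ : Fin k → ℝ := ∑ e ∈ F, lam e • e with hγdef
  set C : Set (Fin k → ℝ) := convexHull ℝ (↑F : Set (Fin k → ℝ)) with hC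
  have hγC : γ ∈ C := combo_mem F lam (fun e he => (hpos e he).le) hsum
  have hγA : γ ∈ affineSpan ℝ (↑F : Set (Fin k → ℝ)) := convexHull_subset_affineSpan _ hγC
  -- the linear section
  set vfun : {v // v ∈ F} → (Fin k → ℝ) := fun s => (s : Fin k → ℝ) - γ with hvfun
  set T : ({v // v ∈ F} → ℝ) →ₗ[ℝ] (Fin k → ℝ) := Fintype.linearCombination ℝ vfun with hT
  set W : Submodule ℝ (Fin k → ℝ) := vectorSpan ℝ (↑F : Set (Fin k → ℝ)) with hW
  have hvW : ∀ i : {v // v ∈ F}, vfun i ∈ W := by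
    intro i
    have h1 : (i : Fin k → ℝ) ∈ affineSpan ℝ (↑F : Set (Fin k → ℝ)) :=
      subset_affineSpan ℝ _ (Finset.mem_coe.2 i.2)
    have := AffineSubspace.vsub_mem_direction h1 hγA
    rwa [direction_affineSpan] at this
  have hTW : ∀ cc : {v // v ∈ F} → ℝ, T cc ∈ W := by
    intro cc
    rw [hT, Fintype.linearCombination_apply]
    exact Submodule.sum_mem _ fun i _ => Submodule.smul_mem _ _ (hvW i)
  have hsingle : ∀ i : {v // v ∈ F}, (i : Fin k → ℝ) - γ ∈ LinearMap.range T := by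
    intro i
    exact ⟨Pi.single i 1, by simp [hT, Fintype.linearCombination_apply_single, hvfun]⟩
  have hrange : W ≤ LinearMap.range T := by
    rw [hW, vectorSpan_def, Submodule.span_le]
    rintro v ⟨a, ha, b, hb, rfl⟩
    have h1 := hsingle ⟨a, Finset.mem_coe.1 ha⟩
    have h2 := hsingle ⟨b, Finset.mem_coe.1 hb⟩
    have h3 := Submodule.sub_mem _ h1 h2
    simpa [vsub_eq_sub, sub_sub_sub_cancel_right] using h3
  set T' : ({v // v ∈ F} → ℝ) →ₗ[ℝ] W := T.codRestrict W hTW with hT'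
  have hsurj : Function.Surjective T' := by
    rintro ⟨w, hw⟩
    obtain ⟨cc, hcc⟩ := hrange hw
    exact ⟨cc, Subtype.ext (by simpa [hT', LinearMap.codRestrict_apply] using hcc)⟩
  obtain ⟨g, hg⟩ := T'.exists_rightInverse_of_surjective (LinearMap.range_eq_top.2 hsurj)
  have hginv : ∀ w : W, T (g w) = (w : Fin k → ℝ) := by
    intro w
    have := LinearMap.ext_iff.1 hg w
    simpa [hT', LinearMap.codRestrict_apply, Subtype.ext_iff] using this
  obtain ⟨Cb, hCbpos, hCb⟩ : ∃ Cb > 0, ∀ w : W, ‖g w‖ ≤ Cb * ‖w‖ := by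
    refine ⟨‖LinearMap.toContinuousLinearMap g‖ + 1, by positivity, fun w => ?_⟩
    have h1 := (LinearMap.toContinuousLinearMap g).le_opNorm w
    have h2 : ‖LinearMap.toContinuousLinearMap g‖ * ‖w‖
        ≤ (‖LinearMap.toContinuousLinearMap g‖ + 1) * ‖w‖ :=
      mul_le_mul_of_nonneg_right (by linarith) (norm_nonneg _)
    exact le_trans h1 h2
  -- constants
  set n : ℕ := F.card with hn
  have hn0 : 0 < (n : ℝ) := by exact_mod_cast Finset.card_pos.mpr hF
  set lmin : ℝ := F.inf' hF lam with hlm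
  have hlmin : 0 < lmin := (Finset.lt_inf'_iff _).2 hpos
  set ε : ℝ := min (lmin / 4) (1 / (2 * n)) with hε
  have hεpos : 0 < ε := lt_min (by linarith) (by positivity)
  set δ : ℝ := ε / Cb with hδ
  have hδpos : 0 < δ := div_pos hεpos hCbpos
  -- the key inclusion
  have hkey : Metric.ball γ δ ∩ (affineSpan ℝ (↑F : Set (Fin k → ℝ)) : Set (Fin k → ℝ)) ⊆ C := by
    rintro y ⟨hyb, hyA⟩
    have hwmem : y - γ ∈ W := by
      have := AffineSubspace.vsub_mem_direction hyA hγA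
      rwa [direction_affineSpan] at this
    set w : W := ⟨y - γ, hwmem⟩ with hwdef
    set cc : {v // v ∈ F} → ℝ := g w with hcc
    have hTcc : T cc = y - γ := hginv w
    have hccnorm : ‖cc‖ < ε := by
      have h1 : ‖cc‖ ≤ Cb * ‖w‖ := hCb w
      have h2 : ‖w‖ < δ := by
        rw [hwdef]
        simpa [dist_eq_norm] using hyb
      have h4 : Cb * ‖w‖ < Cb * δ := mul_lt_mul_of_pos_left h2 hCbpos
      have h5 : Cb * δ = ε := by
        rw [hδ, mul_div_cancel₀ _ (ne_of_gt hCbpos)]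
      linarith
    have hcci : ∀ i, |cc i| < ε := fun i =>
      lt_of_le_of_lt (by simpa [Real.norm_eq_abs] using norm_le_pi_norm cc i) hccnorm
    set S : ℝ := ∑ i : {v // v ∈ F}, cc i with hS
    have hcard : (Finset.univ : Finset {v // v ∈ F}).card = n := by
      simp [hn, Fintype.card_coe]
    have hSabs : |S| ≤ n * ε := by
      calc |S| ≤ ∑ i : {v // v ∈ F}, |cc i| := Finset.abs_sum_le_sum_abs _ _
        _ ≤ ∑ _i : {v // v ∈ F}, ε := Finset.sum_le_sum fun i _ => (hcci i).le
        _ = n * ε := by rw [Finset.sum_const, hcard, nsmul_eq_mul]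
    have hShalf : |S| ≤ 1 / 2 := by
      have : (n : ℝ) * ε ≤ (n : ℝ) * (1 / (2 * n)) :=
        mul_le_mul_of_nonneg_left (min_le_right _ _) hn0.le
      have h2 : (n : ℝ) * (1 / (2 * n)) = 1 / 2 := by
        rw [mul_one_div, div_eq_div_iff (by linarith) (by norm_num)]
        ring
      linarith
    -- the weights
    set wt : (Fin k → ℝ) → ℝ := fun v => (1 - S) * lam v + (if h : v ∈ F then cc ⟨v, h⟩ else 0)
      with hwt
    have hwtpos : ∀ e ∈ F, 0 ≤ wt e := by
      intro e he
      have hle : lmin ≤ lam e := Finset.inf'_le _ he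
      have h1 : (1 : ℝ) - S ≥ 1 / 2 := by
        have := abs_le.1 hShalf
        linarith [this.2]
      have h2 : cc ⟨e, he⟩ ≥ -ε := by
        have := abs_le.1 (hcci ⟨e, he⟩).le
        linarith [this.1]
      have hεle : ε ≤ lmin / 4 := min_le_left _ _
      have : (1 - S) * lam e ≥ (1 / 2) * lmin := by nlinarith
      rw [hwt]
      simp only [dif_pos he]
      nlinarith
    have hdite : ∀ f : {v // v ∈ F} → ℝ,
        (∑ e ∈ F, if h : e ∈ F then f ⟨e, h⟩ else 0) = ∑ i : {v // v ∈ F}, f i := by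
      intro f
      rw [← Finset.sum_attach F (fun e => if h : e ∈ F then f ⟨e, h⟩ else 0),
        ← Finset.attach_eq_univ]
      exact Finset.sum_congr rfl fun i _ => by rw [dif_pos i.2]
    have hwtsum : ∑ e ∈ F, wt e = 1 := by
      rw [hwt]
      rw [Finset.sum_add_distrib, ← Finset.mul_sum, hsum, hdite, ← hS]
      ring
    have hwty : y = ∑ e ∈ F, wt e • e := by
      have hTeq : T cc = (∑ i : {v // v ∈ F}, cc i • (i : Fin k → ℝ)) - S • γ := by
        rw [hT, Fintype.linearCombination_apply]
        rw [hS, Finset.sum_smul]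
        rw [← Finset.sum_sub_distrib]
        exact Finset.sum_congr rfl fun i _ => by rw [hvfun]; rw [smul_sub]
      have hγsum : γ = ∑ e ∈ F, lam e • e := hγdef
      have hy : y = γ + T cc := by rw [hTcc]; abel
      rw [hy, hTeq]
      have hsum2 : ∑ e ∈ F, wt e • e
          = (∑ e ∈ F, ((1 - S) * lam e) • e) + ∑ i : {v // v ∈ F}, cc i • (i : Fin k → ℝ) := by
        rw [hwt]
        have : ∀ e ∈ F, ((1 - S) * lam e + (if h : e ∈ F then cc ⟨e, h⟩ else 0)) • e
            = ((1 - S) * lam e) • e + (if h : e ∈ F then cc ⟨e, h⟩ else 0) • e := fun e _ =>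
          add_smul _ _ _
        rw [Finset.sum_congr rfl this, Finset.sum_add_distrib]
        congr 1
        rw [← Finset.sum_attach F (fun e => (if h : e ∈ F then cc ⟨e, h⟩ else 0) • e),
          ← Finset.attach_eq_univ]
        exact Finset.sum_congr rfl fun i _ => by rw [dif_pos i.2]
      rw [hsum2]
      have : ∑ e ∈ F, ((1 - S) * lam e) • e = (1 - S) • γ := by
        rw [hγsum, Finset.smul_sum]
        exact Finset.sum_congr rfl fun e _ => by rw [smul_smul]
      rw [this]
      module
    rw [hwty]
    exact combo_mem F wt hwtpos hwtsum
  -- conclude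
  have hspan : affineSpan ℝ C = affineSpan ℝ (↑F : Set (Fin k → ℝ)) := by
    rw [hC, affineSpan_convexHull]
  rw [mem_intrinsicInterior]
  refine ⟨⟨γ, hspan ▸ hγA⟩, ?_, rfl⟩
  rw [mem_interior]
  refine ⟨Subtype.val ⁻¹' Metric.ball γ δ, ?_, ?_, ?_⟩
  · rintro ⟨zv, hzvA⟩ hz
    have hzA : zv ∈ (affineSpan ℝ (↑F : Set (Fin k → ℝ)) : Set (Fin k → ℝ)) := hspan ▸ hzvA
    exact hkey ⟨hz, hzA⟩
  · exact Metric.isOpen_ball.preimage continuous_subtype_val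
  · simp [hδpos]

private lemma relint_forward {k : ℕ} (F : Finset (Fin k → ℝ)) (hF : F.Nonempty)
    (γ : Fin k → ℝ)
    (hγ : γ ∈ intrinsicInterior ℝ (convexHull ℝ (↑F : Set (Fin k → ℝ)))) :
    ∃ lam : (Fin k → ℝ) → ℝ, (∀ e ∈ F, 0 < lam e) ∧ (∑ e ∈ F, lam e) = 1 ∧
      γ = ∑ e ∈ F, lam e • e := by
  classical
  set C : Set (Fin k → ℝ) := convexHull ℝ (↑F : Set (Fin k → ℝ)) with hC
  obtain ⟨x, hx, hxγ⟩ := mem_intrinsicInterior.1 hγ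
  have hγC : γ ∈ C := by
    have := interior_subset hx
    rw [Set.mem_preimage, hxγ] at this
    exact this
  set n : ℕ := F.card with hn
  have hn0 : 0 < (n : ℝ) := by exact_mod_cast Finset.card_pos.mpr hF
  set b : Fin k → ℝ := ∑ e ∈ F, (n : ℝ)⁻¹ • e with hb
  have hbC : b ∈ C := combo_mem F (fun _ => (n : ℝ)⁻¹) (fun e _ => by positivity)
    (by rw [Finset.sum_const, nsmul_eq_mul, ← hn, mul_inv_cancel₀ (ne_of_gt hn0)])
  have hγA : γ ∈ affineSpan ℝ C := subset_affineSpan ℝ C hγC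
  have hbA : b ∈ affineSpan ℝ C := subset_affineSpan ℝ C hbC
  have hmem : ∀ t : ℝ, γ + t • (γ - b) ∈ affineSpan ℝ C := by
    intro t
    have := AffineSubspace.smul_vsub_vadd_mem (affineSpan ℝ C) t hγA hbA hγA
    simpa [vsub_eq_sub, vadd_eq_add, add_comm] using this
  set cpath : ℝ → (affineSpan ℝ C) := fun t => ⟨γ + t • (γ - b), hmem t⟩ with hcpath
  have hcont : Continuous cpath := Continuous.subtype_mk (by fun_prop) _
  have hc0 : cpath 0 = x := Subtype.ext (by simp [hcpath, hxγ])
  have hU : IsOpen (cpath ⁻¹' interior ((↑) ⁻¹' C : Set (affineSpan ℝ C))) :=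
    isOpen_interior.preimage hcont
  have h0 : (0 : ℝ) ∈ cpath ⁻¹' interior ((↑) ⁻¹' C : Set (affineSpan ℝ C)) := by
    rw [Set.mem_preimage, hc0]
    exact hx
  obtain ⟨ε, hεpos, hball⟩ := Metric.isOpen_iff.1 hU 0 h0
  set t : ℝ := ε / 2 with htdef
  have ht : 0 < t := half_pos hεpos
  have htmem : t ∈ Metric.ball (0 : ℝ) ε := by
    rw [Metric.mem_ball, dist_zero_right, Real.norm_eq_abs, abs_of_pos ht]
    rw [htdef]
    linarith
  have hzC : γ + t • (γ - b) ∈ C := by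
    have := interior_subset (hball htmem)
    rw [Set.mem_preimage] at this
    exact this
  obtain ⟨μ, hμ0, hμ1, hμz⟩ := mem_combo F hzC
  set lam : (Fin k → ℝ) → ℝ := fun v => (μ v + t * (n : ℝ)⁻¹) / (1 + t) with hlam
  have h1t : (0 : ℝ) < 1 + t := by linarith
  have hpos' : ∀ e ∈ F, 0 < lam e := by
    intro e he
    have h1 := hμ0 e he
    have h2 : 0 < t * (n : ℝ)⁻¹ := by positivity
    exact div_pos (by linarith) h1t
  have hsumin : ∑ e ∈ F, (μ e + t * (n : ℝ)⁻¹) = 1 + t := by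
    rw [Finset.sum_add_distrib, hμ1, Finset.sum_const, nsmul_eq_mul, ← hn,
      mul_comm t, ← mul_assoc, mul_inv_cancel₀ (ne_of_gt hn0), one_mul]
  have hsum' : ∑ e ∈ F, lam e = 1 := by
    rw [hlam]
    rw [← Finset.sum_div, hsumin, div_self (ne_of_gt h1t)]
  have key : (1 + t) • γ = ∑ e ∈ F, (μ e + t * (n : ℝ)⁻¹) • e := by
    have hbsum : t • b = ∑ e ∈ F, (t * (n : ℝ)⁻¹) • e := by
      rw [hb, Finset.smul_sum]
      exact Finset.sum_congr rfl fun e _ => smul_smul t _ e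
    have hstep : (1 + t) • γ = (γ + t • (γ - b)) + t • b := by module
    rw [hstep, hμz, hbsum, ← Finset.sum_add_distrib]
    exact Finset.sum_congr rfl fun e _ => (add_smul _ _ _).symm
  refine ⟨lam, hpos', hsum', ?_⟩
  have hγeq : γ = (1 + t)⁻¹ • ∑ e ∈ F, (μ e + t * (n : ℝ)⁻¹) • e := by
    rw [← key, inv_smul_smul₀ (ne_of_gt h1t)]
  rw [hγeq, Finset.smul_sum]
  refine Finset.sum_congr rfl fun e _ => by rw [smul_smul]; congr 1; simp only [hlam]; rw [div_eq_inv_mul]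

theorem stmt2 (k : ℕ) (P : Set (Fin k → ℝ))
    (hP : ∃ t : Finset (Fin k → ℝ), P = convexHull ℝ ↑t) (hne : P.Nonempty) :
    (Set.extremePoints ℝ P).Finite ∧
    ∀ γ : Fin k → ℝ, γ ∈ intrinsicInterior ℝ P ↔
      ∃ lam : (Fin k → ℝ) → ℝ,
        (∀ e ∈ Set.extremePoints ℝ P, 0 < lam e ∧ lam e ≤ 1) ∧
        (∑ᶠ e ∈ Set.extremePoints ℝ P, lam e) = 1 ∧
        γ = ∑ᶠ e ∈ Set.extremePoints ℝ P, lam e • e := by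
  classical
  obtain ⟨t, hPt⟩ := hP
  have hconv : Convex ℝ P := hPt ▸ convex_convexHull ℝ _
  have hcomp : IsCompact P := hPt ▸ t.finite_toSet.isCompact_convexHull ℝ
  have hEsub : Set.extremePoints ℝ P ⊆ ↑t := by
    rw [hPt]; exact extremePoints_convexHull_subset
  have hEfin : (Set.extremePoints ℝ P).Finite := t.finite_toSet.subset hEsub
  have hEne : (Set.extremePoints ℝ P).Nonempty := hcomp.extremePoints_nonempty hne
  set F : Finset (Fin k → ℝ) := hEfin.toFinset with hFdef
  have hFE : (↑F : Set (Fin k → ℝ)) = Set.extremePoints ℝ P := hEfin.coe_toFinset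
  have hFne : F.Nonempty := by
    obtain ⟨e, he⟩ := hEne
    exact ⟨e, hEfin.mem_toFinset.2 he⟩
  have hPE : P = convexHull ℝ (↑F : Set (Fin k → ℝ)) := by
    rw [hFE]
    have hcl : closure (convexHull ℝ (Set.extremePoints ℝ P)) = P :=
      closure_convexHull_extremePoints hcomp hconv
    have hclosed : IsClosed (convexHull ℝ (Set.extremePoints ℝ P)) :=
      hEfin.isClosed_convexHull ℝ
    rw [← hclosed.closure_eq, hcl]
  refine ⟨hEfin, fun γ => ?_⟩
  constructor
  · intro hγ
    rw [hPE] at hγ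
    obtain ⟨lam, hpos, hsum, hγeq⟩ := relint_forward F hFne γ hγ
    refine ⟨lam, ?_, ?_, ?_⟩
    · intro e he
      have heF : e ∈ F := hEfin.mem_toFinset.2 he
      refine ⟨hpos e heF, ?_⟩
      have h1 := Finset.single_le_sum (f := lam) (fun i hi => (hpos i hi).le) heF
      linarith
    · rw [← hFE, finsum_mem_coe_finset, hsum]
    · rw [← hFE, finsum_mem_coe_finset]
      exact hγeq
  · rintro ⟨lam, hpos, hsum, hγeq⟩
    rw [← hFE, finsum_mem_coe_finset] at hsum hγeq
    have hpos' : ∀ e ∈ F, 0 < lam e := fun e he =>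
      (hpos e (hEfin.mem_toFinset.1 he)).1
    rw [hPE, hγeq]
    exact relint_backward F hFne lam hpos' hsum
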